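/- If K ⊆ ℝⁿ is a convex body containing the ball hBⁿ for some h > 0, then its isoperimetric quotient satisfies iq(K) ≤ (n/h)·vol_n(K)^{1/n}, where iq(K) = vol_{n-1}(∂K)/vol_n(K)^{(n-1)/n}. -/

import Mathlib

open MeasureTheory Metric Filter
open scoped Pointwise RealInnerProductSpace

/-- If a convex body `K ⊆ ℝⁿ` contains the ball `h·Bⁿ` for some `h > 0`,
then its isoperimetric quotient satisfies `iq(K) ≤ (n/h)·vol_n(K)^{1/n}`, where the
surface area `S = vol_{n-1}(∂K)` is defined as the Minkowski content. -/
theorem stmt0 (n : ℕ) (hn : 0 < n) (h : ℝ) (hh : 0 < h)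
    (K : Set (EuclideanSpace ℝ (Fin n)))
    (hKcpt : IsCompact K) (hKconv : Convex ℝ K) (hKint : (interior K).Nonempty)
    (hball : closedBall (0 : EuclideanSpace ℝ (Fin n)) h ⊆ K)
    (S : ℝ)
    (hS : Tendsto
      (fun s : ℝ =>
        ((volume (K + s • closedBall (0 : EuclideanSpace ℝ (Fin n)) 1)).toReal
          - (volume K).toReal) / s)
      (nhdsWithin 0 (Set.Ioi 0)) (nhds S)) :
    S / (volume K).toReal ^ (((n : ℝ) - 1) / n)
      ≤ ((n : ℝ) / h) * (volume K).toReal ^ ((1 : ℝ) / n) := by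
  set V := (volume K).toReal with hV
  have hVfin : volume K ≠ ⊤ := hKcpt.measure_lt_top.ne
  have hVpos : 0 < V := by
    refine ENNReal.toReal_pos ?_ hVfin
    have h1 : 0 < volume (interior K) := isOpen_interior.measure_pos _ hKint
    exact (h1.trans_le (measure_mono interior_subset)).ne'
  have hn' : (n : ℝ) ≠ 0 := Nat.cast_ne_zero.mpr hn.ne'
  -- containment
  have hsub : ∀ s : ℝ, 0 < s →
      K + s • closedBall (0 : EuclideanSpace ℝ (Fin n)) 1 ⊆ (1 + s / h) • K := by
    intro s hs
    have h1 : s • closedBall (0 : EuclideanSpace ℝ (Fin n)) 1 ⊆ (s / h) • K := by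
      rintro _ ⟨y, hy, rfl⟩
      refine ⟨h • y, hball ?_, ?_⟩
      · simp only [mem_closedBall, dist_zero_right] at hy ⊢
        rw [norm_smul, Real.norm_eq_abs, abs_of_pos hh]
        calc h * ‖y‖ ≤ h * 1 := by gcongr
          _ = h := mul_one h
      · show (s / h) • (h • y) = s • y
        rw [smul_smul, div_mul_cancel₀ _ hh.ne']
    have h2 : K + s • closedBall (0 : EuclideanSpace ℝ (Fin n)) 1 ⊆ K + (s / h) • K :=
      Set.add_subset_add_left h1
    refine h2.trans ?_
    rw [hKconv.add_smul (by norm_num : (0:ℝ) ≤ 1) (by positivity : (0:ℝ) ≤ s / h), one_smul]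
  -- pointwise bound on the difference quotient
  have hle : ∀ s ∈ Set.Ioi (0:ℝ),
      ((volume (K + s • closedBall (0 : EuclideanSpace ℝ (Fin n)) 1)).toReal - V) / s
        ≤ (((1 + s / h) ^ n - 1) / s) * V := by
    intro s hs
    have hs : (0:ℝ) < s := hs
    have hc : (0:ℝ) < 1 + s / h := by positivity
    have hvol : (volume (K + s • closedBall (0 : EuclideanSpace ℝ (Fin n)) 1)).toReal
        ≤ (1 + s / h) ^ n * V := by
      have h1 := measure_mono (μ := (volume : Measure (EuclideanSpace ℝ (Fin n)))) (hsub s hs)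
      rw [Measure.addHaar_smul] at h1
      have h2 : (volume (K + s • closedBall (0 : EuclideanSpace ℝ (Fin n)) 1)).toReal
          ≤ (ENNReal.ofReal (|(1 + s / h) ^ Module.finrank ℝ (EuclideanSpace ℝ (Fin n))|)
            * volume K).toReal := by
        refine ENNReal.toReal_mono ?_ h1
        exact ENNReal.mul_ne_top ENNReal.ofReal_ne_top hVfin
      rw [ENNReal.toReal_mul, ENNReal.toReal_ofReal (abs_nonneg _)] at h2
      simpa [abs_of_pos (pow_pos hc _)] using h2
    rw [div_mul_eq_mul_div]
    gcongr
    nlinarith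
  -- limit of the comparison function
  have hder : HasDerivAt (fun s : ℝ => (1 + s / h) ^ n) ((n : ℝ) / h) 0 := by
    have h1 : HasDerivAt (fun s : ℝ => 1 + s / h) (1 / h) 0 :=
      ((hasDerivAt_id 0).div_const h).const_add 1
    have h2 := h1.pow n
    simpa [mul_one_div, div_eq_mul_inv, Pi.pow_def] using h2
  have htend : Tendsto (fun s : ℝ => (((1 + s / h) ^ n - 1) / s) * V)
      (nhdsWithin 0 (Set.Ioi 0)) (nhds ((n : ℝ) / h * V)) := by
    have h1 := (hasDerivAt_iff_tendsto_slope.mp hder).mono_left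
      (nhdsWithin_mono 0 (fun x hx => ne_of_gt hx))
    have h2 := h1.mul_const V
    refine h2.congr' ?_
    filter_upwards [self_mem_nhdsWithin] with s hs
    simp [slope_def_field]
  have hSle : S ≤ (n : ℝ) / h * V := by
    refine le_of_tendsto_of_tendsto hS htend ?_
    exact Filter.eventually_of_mem self_mem_nhdsWithin hle
  -- conclude
  have hpow : V ^ ((1:ℝ) / n) * V ^ (((n:ℝ) - 1) / n) = V := by
    rw [← Real.rpow_add hVpos]
    have : (1:ℝ) / n + ((n:ℝ) - 1) / n = 1 := by field_simp; ring
    rw [this, Real.rpow_one]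
  rw [div_le_iff₀ (Real.rpow_pos_of_pos hVpos _)]
  calc S ≤ (n : ℝ) / h * V := hSle
    _ = (n : ℝ) / h * V ^ ((1:ℝ) / n) * V ^ (((n:ℝ) - 1) / n) := by
        rw [mul_assoc, hpow]
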